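/- For every c ∈ ℕ there exists n ∈ ℕ such that every tree d ∈ T_R^{(c)} has height(d) < n; consequently, the set T_R^{(c)} of trees that are c'-cyclic for some c' ≤ c is finite. -/

import Mathlib

open scoped Classical

/-- Trees over a ranked set `R` with arity function `ar`:
`RT.node r ts` is a tree whose root is labelled `r` and which has `ar r` children. -/
inductive RT (R : Type) (ar : R → ℕ) : Type
  | node (r : R) (children : Fin (ar r) → RT R ar)

namespace RT

variable {R : Type} {ar : R → ℕ}

/-- The rule labelling the root of a tree. -/
def rootRule : RT R ar → R
  | node r _ => r

/-- The subtree at a position (`none` if the position is not a position of the tree). -/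
def subAt : RT R ar → List ℕ → Option (RT R ar)
  | t, [] => some t
  | node r ts, i :: p => if h : i < ar r then subAt (ts ⟨i, h⟩) p else none

/-- Replace the subtree at a position by another tree. -/
def replaceAt : RT R ar → List ℕ → RT R ar → RT R ar
  | _, [], s => s
  | node r ts, i :: p, s => node r fun j => if j.1 = i then replaceAt (ts j) p s else ts j

/-- The sequence of rule labels from the root to a position, inclusive. -/
def seqTo : RT R ar → List ℕ → Option (List R)
  | node r _, [] => some [r]
  | node r ts, i :: p => if h : i < ar r then (seqTo (ts ⟨i, h⟩) p).map (fun l => r :: l) else none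

/-- `p` is a leaf position of `d`, i.e. a valid position with no child positions. -/
def LeafAt (d : RT R ar) (p : List ℕ) : Prop :=
  ∃ t, subAt d p = some t ∧ ar t.rootRule = 0

/-- The height of a tree: `0` on nullary nodes, otherwise `1` plus the maximum height
of the direct subtrees. -/
def height : RT R ar → ℕ
  | node _ ts => Finset.univ.sup fun i => height (ts i) + 1

end RT

/-- The weight of a tree: evaluate it bottom-up, interpreting each rule `r` by the
operation `wt r`. -/
def wtval {K R : Type} {ar : R → ℕ} (wt : ∀ r : R, (Fin (ar r) → K) → K) : RT R ar → K
  | .node r ts => wt r fun i => wtval wt (ts i)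

section Cyclicity

variable {R : Type} {ar : R → ℕ}

/-- A string over `R` is an elementary cycle if it has length `> 1`, its first and last
symbols coincide, and it becomes repetition-free after deleting its last (resp. first)
symbol. -/
def ElementaryCycle (w : List R) : Prop :=
  1 < w.length ∧ w.head? = w.getLast? ∧ w.dropLast.Nodup ∧ w.tail.Nodup

/-- `ρ` is `(c,w)`-cyclic: `ρ = v₀ w v₁ ⋯ w v_c` (with `c` occurrences of the elementary
cycle `w`) where `w` is not an infix of any `vᵢ`. -/
def CWCyclic (c : ℕ) (w ρ : List R) : Prop :=
  ElementaryCycle w ∧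
  ∃ v : ℕ → List R,
    ρ = v 0 ++ (((List.range c).map fun i => w ++ v (i + 1)).flatten) ∧
    ∀ i ≤ c, ¬ w <:+: v i

/-- `ρ` is `c`-cyclic: it is `(c,w)`-cyclic for some elementary cycle `w` and not
`(c',w')`-cyclic for any `c' > c` and elementary cycle `w'`. -/
def CCyclic (c : ℕ) (ρ : List R) : Prop :=
  (∃ w, CWCyclic c w ρ) ∧ ∀ c', c < c' → ∀ w', ¬ CWCyclic c' w' ρ

/-- The leaf position `p` of `d` is `(c,w)`-cyclic. -/
def LeafCW (c : ℕ) (w : List R) (d : RT R ar) (p : List ℕ) : Prop :=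
  RT.LeafAt d p ∧ ∃ ρ, RT.seqTo d p = some ρ ∧ CWCyclic c w ρ

/-- The leaf position `p` of `d` is `c`-cyclic. -/
def LeafC (c : ℕ) (d : RT R ar) (p : List ℕ) : Prop :=
  RT.LeafAt d p ∧ ∃ ρ, RT.seqTo d p = some ρ ∧ CCyclic c ρ

/-- The tree `d` is `c`-cyclic: some leaf of `d` is `c`-cyclic and no leaf of `d` is
`c'`-cyclic for any `c' > c`. -/
def TreeC (c : ℕ) (d : RT R ar) : Prop :=
  (∃ p, LeafC c d p) ∧ ∀ c', c < c' → ∀ p, ¬ LeafC c' d p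

/-- `d ⊢_w d'` : there are positions `p ≤ p'` of `d` whose connecting label sequence is
`w`, and `d'` is obtained by replacing the subtree at `p` by the subtree at `p'`.
(The position `p'` is `p ++ q`.) -/
def CutW (w : List R) (d d' : RT R ar) : Prop :=
  ∃ p q t s, RT.subAt d p = some t ∧ RT.subAt t q = some s ∧
    RT.seqTo t q = some w ∧ d' = RT.replaceAt d p s

/-- `d ⊢ d'` : `d ⊢_w d'` for some elementary cycle `w`. -/
def Cut (d d' : RT R ar) : Prop := ∃ w, ElementaryCycle w ∧ CutW w d d'

/-- The set of `w`-cutout trees of `d`. -/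
def cotreesW (w : List R) (d : RT R ar) : Set (RT R ar) := {d' | Relation.TransGen (CutW w) d d'}

/-- The set of cutout trees of `d`. -/
def cotrees (d : RT R ar) : Set (RT R ar) := {d' | Relation.TransGen Cut d d'}

end Cyclicity

section Rules

variable {N R : Type}

/-- Well-sorted trees over a rule system given by `lhs` and `rhs`: at each node labelled
`r`, the `i`-th child is a well-sorted tree whose root label has left-hand side equal to
the `i`-th nonterminal of `rhs r`. -/
inductive WellSorted (lhs : R → N) (rhs : R → List N) :
    RT R (fun r => (rhs r).length) → Prop
  | node (r : R) (ts : Fin (rhs r).length → RT R fun r => (rhs r).length)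
      (hsort : ∀ i, lhs (ts i).rootRule = (rhs r).get i)
      (hrec : ∀ i, WellSorted lhs rhs (ts i)) : WellSorted lhs rhs (RT.node r ts)

/-- `T_R` : the set of (well-sorted) trees over the rule system. -/
def TRset (lhs : R → N) (rhs : R → List N) : Set (RT R fun r => (rhs r).length) :=
  {d | WellSorted lhs rhs d}

/-- `(T_R)_A` : the set of trees of sort `A`. -/
def TRA (lhs : R → N) (rhs : R → List N) (A : N) : Set (RT R fun r => (rhs r).length) :=
  {d | WellSorted lhs rhs d ∧ lhs d.rootRule = A}

/-- `T_R^{(c)}` : the set of trees that are `c'`-cyclic for some `c' ≤ c`. -/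
def TRcset (lhs : R → N) (rhs : R → List N) (c : ℕ) : Set (RT R fun r => (rhs r).length) :=
  {d | WellSorted lhs rhs d ∧ ∃ c' ≤ c, TreeC c' d}

end Rules

section Aux
variable {R : Type}



theorem first_occ {x : R} : ∀ {s : List R}, x ∈ s → ∃ s1 s2, s = s1 ++ x :: s2 ∧ x ∉ s1 := by
  intro s hs
  induction s with
  | nil => simp at hs
  | cons z s ih =>
    by_cases hzx : z = x
    · exact ⟨[], s, by simp [hzx], by simp⟩
    · have hx : x ∈ s := by
        rcases List.mem_cons.1 hs with h | h
        · exact absurd h.symm hzx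
        · exact h
      obtain ⟨s1, s2, h1, h2⟩ := ih hx
      refine ⟨z :: s1, s2, by simp [h1], ?_⟩
      intro hm
      rcases List.mem_cons.1 hm with h | h
      exacts [hzx h.symm, h2 h]

theorem lemD : ∀ {l : List R}, ¬ l.Nodup → ∃ y q, (y :: (q ++ [y])) <:+: l := by
  intro l hl
  induction l with
  | nil => simp at hl
  | cons z l ih =>
    by_cases hz : z ∈ l
    · obtain ⟨s1, s2, h1, _⟩ := first_occ hz
      exact ⟨z, s1, ⟨[], s2, by simp [h1]⟩⟩
    · have : ¬ l.Nodup := fun h => hl (List.nodup_cons.2 ⟨hz, h⟩)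
      obtain ⟨y, q, hinf⟩ := ih this
      exact ⟨y, q, hinf.trans (List.infix_cons (List.infix_refl l))⟩

theorem lemC' : ∀ (n : ℕ) (y : R) (q : List R), (y :: (q ++ [y])).length ≤ n →
    ∃ w, ElementaryCycle w ∧ w <:+: (y :: (q ++ [y])) := by
  intro n
  induction n with
  | zero => intro y q h; simp at h
  | succ n ih =>
    intro y q hlen
    have hd : (y :: (q ++ [y])).dropLast = y :: q := by
      rw [show y :: (q ++ [y]) = (y :: q) ++ [y] by simp, List.dropLast_concat]
    by_cases h1 : (y :: q).Nodup
    · by_cases h2 : (q ++ [y]).Nodup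
      · refine ⟨y :: (q ++ [y]), ⟨by simp, ?_, ?_, ?_⟩, List.infix_refl _⟩
        · rw [show y :: (q ++ [y]) = (y :: q) ++ [y] by simp, List.getLast?_concat]; rfl
        · rw [hd]; exact h1
        · exact h2
      · obtain ⟨y', q', hinf⟩ := lemD h2
        have hlen' : (y' :: (q' ++ [y'])).length ≤ n := by
          have := hinf.length_le
          simp at this hlen ⊢
          omega
        obtain ⟨w, hw, hwinf⟩ := ih y' q' hlen'
        exact ⟨w, hw, hwinf.trans (hinf.trans ((List.suffix_cons y (q ++ [y])).isInfix))⟩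
    · obtain ⟨y', q', hinf⟩ := lemD h1
      have hlen' : (y' :: (q' ++ [y'])).length ≤ n := by
        have := hinf.length_le
        simp at this hlen ⊢
        omega
      obtain ⟨w, hw, hwinf⟩ := ih y' q' hlen'
      have : (y :: q) <:+: (y :: (q ++ [y])) := by
        rw [← hd]; exact (List.dropLast_prefix _).isInfix
      exact ⟨w, hw, hwinf.trans (hinf.trans this)⟩

theorem lemC {ρ : List R} (h : ¬ ρ.Nodup) : ∃ w, ElementaryCycle w ∧ w <:+: ρ := by
  obtain ⟨y, q, hinf⟩ := lemD h
  obtain ⟨w, hw, hwinf⟩ := lemC' _ y q le_rfl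
  exact ⟨w, hw, hwinf.trans hinf⟩


variable {R : Type}

def HasOcc (k : ℕ) (w ρ : List R) : Prop :=
  ∃ u : ℕ → List R, ρ = u 0 ++ (((List.range k).map fun i => w ++ u (i + 1)).flatten)

theorem flatten_succ (w : List R) (u : ℕ → List R) (k : ℕ) :
    (((List.range (k+1)).map fun i => w ++ u (i + 1)).flatten)
      = w ++ u 1 ++ (((List.range k).map fun i => w ++ u (i + 2)).flatten) := by
  rw [List.range_succ_eq_map]
  simp [List.map_map, Function.comp_def, List.append_assoc]

theorem hasOcc_zero (w ρ : List R) : HasOcc 0 w ρ := ⟨fun _ => ρ, by simp⟩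

theorem hasOcc_prepend {k : ℕ} {w t : List R} (x : List R) (h : HasOcc k w t) :
    HasOcc k w (x ++ t) := by
  obtain ⟨u, hu⟩ := h
  refine ⟨fun n => match n with | 0 => x ++ u 0 | (n+1) => u (n+1), ?_⟩
  simp [hu, List.append_assoc]

theorem hasOcc_cons {k : ℕ} {w t : List R} (a b : List R) (h : HasOcc k w t) :
    HasOcc (k+1) w (a ++ (w ++ (b ++ t))) := by
  obtain ⟨u, hu⟩ := h
  refine ⟨fun n => match n with | 0 => a | 1 => b ++ u 0 | (n+2) => u (n+1), ?_⟩
  show a ++ (w ++ (b ++ t)) = a ++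
    (((List.range (k+1)).map fun i =>
      w ++ (fun n => match n with | 0 => a | 1 => b ++ u 0 | (n+2) => u (n+1)) (i+1)).flatten)
  rw [flatten_succ w (fun n => match n with | 0 => a | 1 => b ++ u 0 | (n+2) => u (n+1)) k]
  show a ++ (w ++ (b ++ t)) = a ++ (w ++ (b ++ u 0) ++
    (((List.range k).map fun i => w ++ u (i+1)).flatten))
  simp [hu, List.append_assoc]

theorem hasOcc_elim {k : ℕ} {w ρ : List R} (h : HasOcc (k+1) w ρ) :
    ∃ s t, ρ = s ++ w ++ t ∧ HasOcc k w t := by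
  obtain ⟨u, hu⟩ := h
  rw [flatten_succ] at hu
  exact ⟨u 0, u 1 ++ (((List.range k).map fun i => w ++ u (i + 2)).flatten),
    by simp [hu, List.append_assoc], ⟨fun n => u (n+1), rfl⟩⟩

theorem hasOcc_length {w : List R} (hw : w ≠ []) :
    ∀ k ρ, HasOcc k w ρ → k ≤ ρ.length := by
  intro k
  induction k with
  | zero => intro ρ _; omega
  | succ k ih =>
    intro ρ h
    obtain ⟨s, t, heq, ht⟩ := hasOcc_elim h
    have := ih t ht
    have hw1 : 1 ≤ w.length := by
      cases w with | nil => simp at hw | cons a l => simp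
    simp [heq]
    omega

theorem leftmost {w : List R} (hw : w ≠ []) :
    ∀ (n : ℕ) (s t : List R), s.length ≤ n →
      ∃ a b, s ++ w ++ t = a ++ w ++ b ∧ ¬ w <:+: a ∧ t <:+ b := by
  intro n
  induction n with
  | zero =>
    intro s t hs
    have : s = [] := List.length_eq_zero_iff.1 (Nat.le_zero.1 hs)
    subst this
    refine ⟨[], t, rfl, ?_, List.suffix_refl t⟩
    intro h
    exact hw (by simpa using h)
  | succ n ih =>
    intro s t hs
    by_cases h : w <:+: s
    · obtain ⟨s1, s2, h12⟩ := h
      have hw1 : 1 ≤ w.length := by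
        cases w with | nil => simp at hw | cons a l => simp
      have hlt : s1.length ≤ n := by
        rw [← h12] at hs; simp at hs; omega
      obtain ⟨a, b, heq, hna, hsuf⟩ := ih s1 (s2 ++ w ++ t) hlt
      refine ⟨a, b, ?_, hna, ?_⟩
      · rw [← heq, ← h12]; simp [List.append_assoc]
      · exact (List.suffix_append (s2 ++ w) t).trans hsuf
    · exact ⟨s, t, rfl, h, List.suffix_refl t⟩




variable {R : Type}

theorem elem_ne_nil {w : List R} (hw : ElementaryCycle w) : w ≠ [] := by
  intro h; rw [h] at hw; simp [ElementaryCycle] at hw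

theorem cwc_hasOcc {c : ℕ} {w ρ : List R} (h : CWCyclic c w ρ) : HasOcc c w ρ := by
  obtain ⟨_, v, hv, _⟩ := h
  exact ⟨v, hv⟩

theorem cwc_length {c : ℕ} {w ρ : List R} (h : CWCyclic c w ρ) : c ≤ ρ.length :=
  hasOcc_length (elem_ne_nil h.1) c ρ (cwc_hasOcc h)

theorem cwc_build {c : ℕ} {w a b : List R} (hw : ElementaryCycle w) (ha : ¬ w <:+: a)
    (h : CWCyclic c w b) : CWCyclic (c+1) w (a ++ (w ++ b)) := by
  obtain ⟨_, v, hv, hinf⟩ := h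
  refine ⟨hw, fun n => match n with | 0 => a | (n+1) => v n, ?_, ?_⟩
  · show a ++ (w ++ b) = a ++
      (((List.range (c+1)).map fun i =>
        w ++ (fun n => match n with | 0 => a | (n+1) => v n) (i+1)).flatten)
    rw [flatten_succ w (fun n => match n with | 0 => a | (n+1) => v n) c]
    show a ++ (w ++ b) = a ++ (w ++ v 0 ++ (((List.range c).map fun i => w ++ v (i+1)).flatten))
    simp [hv, List.append_assoc]
  · intro i hi
    match i with
    | 0 => exact ha
    | (j+1) => exact hinf j (by omega)

theorem lemB {w : List R} (hw : ElementaryCycle w) :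
    ∀ (n : ℕ) (ρ : List R), ρ.length ≤ n → ∀ k, HasOcc k w ρ →
      ∃ c, k ≤ c ∧ CWCyclic c w ρ := by
  have hwne : w ≠ [] := elem_ne_nil hw
  have hw2 : 2 ≤ w.length := hw.1
  intro n
  induction n with
  | zero =>
    intro ρ hρ k hk
    have hρ0 : ρ = [] := List.length_eq_zero_iff.1 (Nat.le_zero.1 hρ)
    subst hρ0
    have hk0 : k = 0 := Nat.le_zero.1 (hasOcc_length hwne k [] hk)
    subst hk0
    refine ⟨0, le_rfl, hw, fun _ => [], by simp, ?_⟩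
    intro i hi
    intro h
    exact hwne (by simpa using h)
  | succ n ih =>
    intro ρ hρ k hk
    by_cases h : w <:+: ρ
    · -- get a decomposition ρ = s ++ w ++ t with HasOcc (k-1) w t
      have hdec : ∃ s t, ρ = s ++ w ++ t ∧ HasOcc (k-1) w t := by
        match k with
        | 0 =>
          obtain ⟨s, t, hst⟩ := h
          exact ⟨s, t, hst.symm, hasOcc_zero w t⟩
        | (j+1) =>
          obtain ⟨s, t, hst, ht⟩ := hasOcc_elim hk
          exact ⟨s, t, hst, ht⟩
      obtain ⟨s, t, hst, ht⟩ := hdec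
      obtain ⟨a, b, heq, hna, hsuf⟩ := leftmost hwne s.length s t le_rfl
      rw [← hst] at heq
      obtain ⟨x, hx⟩ := hsuf
      have hb : HasOcc (k-1) w b := by rw [← hx]; exact hasOcc_prepend x ht
      have hblen : b.length ≤ n := by
        have : ρ.length = a.length + (w.length + b.length) := by rw [heq]; simp
        omega
      obtain ⟨c, hc, hcw⟩ := ih b hblen (k-1) hb
      refine ⟨c+1, by omega, ?_⟩
      have := cwc_build hw hna hcw
      rwa [show a ++ (w ++ b) = a ++ w ++ b by simp [List.append_assoc], ← heq] at this
    · -- no occurrence: k = 0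
      have hk0 : k = 0 := by
        match k with
        | 0 => rfl
        | (j+1) =>
          obtain ⟨s, t, hst, _⟩ := hasOcc_elim hk
          exact absurd ⟨s, t, hst.symm⟩ h
      subst hk0
      exact ⟨0, le_rfl, hw, fun _ => ρ, by simp, fun i hi => by
        have : i = 0 := Nat.le_zero.1 hi
        rw [this]; exact h⟩



end Aux

section Aux2
variable {R : Type}

theorem elem_length_le [Fintype R] {w : List R} (hw : ElementaryCycle w) :
    w.length ≤ Fintype.card R + 1 := by
  have h1 := hw.2.2.1.length_le_card
  have h2 : w.dropLast.length = w.length - 1 := List.length_dropLast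
  have := hw.1
  omega

/-- The finset of all lists over `R` of length at most `m+1`. -/
noncomputable def listFinset (R : Type) [Fintype R] (m : ℕ) : Finset (List R) :=
  Finset.univ.image (fun s : (Σ n : Fin (m+2), (Fin (n : ℕ) → R)) => List.ofFn s.2)

theorem mem_listFinset [Fintype R] {m : ℕ} {l : List R} (h : l.length ≤ m + 1) :
    l ∈ listFinset R m := by
  refine Finset.mem_image.2 ⟨⟨⟨l.length, by omega⟩, l.get⟩, Finset.mem_univ _, ?_⟩
  exact List.ofFn_get l

theorem lemG [Fintype R] :
    ∀ (K : ℕ) (ρ : List R), K * (Fintype.card R + 1) ≤ ρ.length →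
      ∃ F : Multiset (List R), Multiset.card F = K ∧ (∀ w ∈ F, ElementaryCycle w) ∧
        ∀ w, HasOcc (F.count w) w ρ := by
  intro K
  set m := Fintype.card R with hm
  induction K with
  | zero =>
    intro ρ _
    exact ⟨0, rfl, by simp, fun w => by simpa using hasOcc_zero w ρ⟩
  | succ K ih =>
    intro ρ hρ
    set B := ρ.take (m+1) with hB
    set ρ' := ρ.drop (m+1) with hρ'
    have hBlen : B.length = m + 1 := by
      rw [hB, List.length_take]
      have : m + 1 ≤ ρ.length := by nlinarith
      omega
    have hBnd : ¬ B.Nodup := by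
      intro h
      have := h.length_le_card
      omega
    obtain ⟨w0, hw0, hw0inf⟩ := lemC hBnd
    obtain ⟨a, b, hab⟩ := hw0inf
    have hρ'len : K * (m+1) ≤ ρ'.length := by
      rw [hρ', List.length_drop]
      have h1 : (K+1) * (m+1) ≤ ρ.length := hρ
      have h2 : (K+1)*(m+1) = K*(m+1)+(m+1) := by ring
      omega
    obtain ⟨F', hcard, helem, hocc⟩ := ih ρ' hρ'len
    refine ⟨w0 ::ₘ F', by simp [hcard], ?_, ?_⟩
    · intro w hw
      rcases Multiset.mem_cons.1 hw with h | h
      · rwa [h]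
      · exact helem w h
    · intro w
      have hsplit : ρ = a ++ (w0 ++ (b ++ ρ')) := by
        have h1 : B ++ ρ' = ρ := List.take_append_drop (m+1) ρ
        rw [← h1, ← hab]
        simp [List.append_assoc]
      by_cases hww : w = w0
      · subst hww
        rw [Multiset.count_cons_self, hsplit]
        exact hasOcc_cons a b (hocc w)
      · rw [Multiset.count_cons_of_ne hww, hsplit]
        have := hocc w
        have h1 : HasOcc (F'.count w) w (b ++ ρ') := hasOcc_prepend b this
        have h2 : HasOcc (F'.count w) w (w0 ++ (b ++ ρ')) := hasOcc_prepend w0 h1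
        exact hasOcc_prepend a h2

theorem exists_ccyclic {ρ : List R} (hρ : ρ ≠ []) :
    ∃ c, c ≤ ρ.length ∧ CCyclic c ρ := by
  obtain ⟨y, ρ', rfl⟩ := List.exists_cons_of_ne_nil hρ
  set ρ := y :: ρ'
  have hw0 : ElementaryCycle [y, y] := by
    refine ⟨by simp, by simp, by simp, by simp⟩
  obtain ⟨c0, _, hc0⟩ := lemB hw0 ρ.length ρ le_rfl 0 (hasOcc_zero _ ρ)
  set P : ℕ → Prop := fun c => ∃ w, CWCyclic c w ρ with hP
  have hbound : ∀ c, P c → c ≤ ρ.length := by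
    rintro c ⟨w, hw⟩
    exact cwc_length hw
  have hc0P : P c0 := ⟨[y, y], hc0⟩
  have hfg : P (Nat.findGreatest P ρ.length) :=
    Nat.findGreatest_spec (hbound c0 hc0P) hc0P
  refine ⟨Nat.findGreatest P ρ.length, Nat.findGreatest_le _, hfg, ?_⟩
  intro c' hc' w' hw'
  have hP' : P c' := ⟨w', hw'⟩
  exact Nat.findGreatest_is_greatest hc' (hbound c' hP') hP'

end Aux2

section Aux3
variable {R : Type} {ar : R → ℕ}

theorem exists_deep_leaf (d : RT R ar) :
    ∃ p ρ, RT.LeafAt d p ∧ RT.seqTo d p = some ρ ∧ ρ.length = d.height + 1 := by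
  induction d with
  | node r ts ih =>
    by_cases h0 : ar r = 0
    · refine ⟨[], [r], ⟨RT.node r ts, rfl, h0⟩, rfl, ?_⟩
      have : (RT.node r ts).height = 0 := by
        rw [RT.height]
        have : (Finset.univ : Finset (Fin (ar r))) = ∅ := by
          rw [Finset.univ_eq_empty_iff]
          rw [h0]; exact Fin.isEmpty
        rw [this, Finset.sup_empty]
        rfl
      rw [this]
      rfl
    · have hne : (Finset.univ : Finset (Fin (ar r))).Nonempty := by
        rw [Finset.univ_nonempty_iff]
        exact Fin.pos_iff_nonempty.1 (Nat.pos_of_ne_zero h0)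
      obtain ⟨i, _, hi⟩ := Finset.exists_mem_eq_sup Finset.univ hne
        (fun i => (ts i).height + 1)
      obtain ⟨p, ρ, ⟨t, hsub, hleaf⟩, hseq, hlen⟩ := ih i
      refine ⟨(i : ℕ) :: p, r :: ρ, ⟨t, ?_, hleaf⟩, ?_, ?_⟩
      · rw [RT.subAt, dif_pos i.isLt]
        simpa using hsub
      · rw [RT.seqTo, dif_pos i.isLt]
        simp only [Fin.eta]
        rw [hseq]
        rfl
      · have hh : (RT.node r ts).height = (ts i).height + 1 := by
          rw [RT.height]; exact hi
        simp [hh, hlen]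

theorem finite_height_lt [Fintype R] :
    ∀ n : ℕ, {d : RT R ar | RT.height d < n}.Finite := by
  intro n
  induction n with
  | zero =>
    convert Set.finite_empty
    ext d; simp
  | succ n ih =>
    haveI : Finite {d : RT R ar // RT.height d < n} := ih.to_subtype
    set f : (Σ r : R, (Fin (ar r) → {d : RT R ar // RT.height d < n})) → RT R ar :=
      fun s => RT.node s.1 (fun i => (s.2 i).1) with hf
    refine (Set.finite_range f).subset ?_
    rintro d hd
    cases d with
    | node r ts =>
      have hts : ∀ i, (ts i).height < n := by
        intro i
        have h1 : (ts i).height + 1 ≤ (RT.node r ts).height := by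
          rw [RT.height]
          exact Finset.le_sup (f := fun i => (ts i).height + 1) (Finset.mem_univ i)
        have h2 : (RT.node r ts).height < n + 1 := hd
        omega
      exact ⟨⟨r, fun i => ⟨ts i, hts i⟩⟩, rfl⟩

end Aux3

/-- For every `c` there is a uniform bound on the heights of the trees in `T_R^{(c)}`;
consequently `T_R^{(c)}` is finite. -/
theorem TRc_bounded_height_and_finite {N R : Type} [Fintype N] [Nonempty N] [Fintype R]
    (lhs : R → N) (rhs : R → List N) (c : ℕ) :
    (∃ n : ℕ, ∀ d ∈ TRcset lhs rhs c, RT.height d < n) ∧ (TRcset lhs rhs c).Finite := by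
  set m := Fintype.card R with hm
  set E := (listFinset R m).card with hE
  set n := (c * E + 1) * (m + 1) with hn
  have hbound : ∀ d ∈ TRcset lhs rhs c, RT.height d < n := by
    rintro d ⟨hws, c', hc'le, ⟨p0, hp0⟩, hmax⟩
    obtain ⟨p, ρ, hleaf, hseq, hlen⟩ := exists_deep_leaf d
    have hρne : ρ ≠ [] := by
      intro h; rw [h] at hlen; simp at hlen
    obtain ⟨c'', hc''len, hcc⟩ := exists_ccyclic hρne
    have hc''le : c'' ≤ c' := by
      by_contra hlt
      push_neg at hlt
      exact hmax c'' hlt p ⟨hleaf, ρ, hseq, hcc⟩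
    have hρlt : ρ.length < n := by
      by_contra hge
      push_neg at hge
      obtain ⟨F, hFcard, hFelem, hFocc⟩ := lemG (c * E + 1) ρ hge
      have hsub : F.toFinset ⊆ listFinset R m := by
        intro w hw
        exact mem_listFinset (elem_length_le (hFelem w (Multiset.mem_toFinset.1 hw)))
      have hex : ∃ w, c + 1 ≤ F.count w := by
        by_contra hall
        push_neg at hall
        have h1 : Multiset.card F = ∑ w ∈ F.toFinset, F.count w :=
          (Multiset.toFinset_sum_count_eq F).symm
        have h2 : ∑ w ∈ F.toFinset, F.count w ≤ ∑ _w ∈ F.toFinset, c :=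
          Finset.sum_le_sum (fun w _ => by have := hall w; omega)
        have h3 : ∑ _w ∈ F.toFinset, c = F.toFinset.card * c := by
          simp [Finset.sum_const, mul_comm]
        have h4 : F.toFinset.card ≤ E := Finset.card_le_card hsub
        rw [hFcard] at h1
        nlinarith
      obtain ⟨w, hwcount⟩ := hex
      have hwmem : w ∈ F := Multiset.count_pos.1 (by omega)
      have hwel : ElementaryCycle w := hFelem w hwmem
      obtain ⟨c3, hc3ge, hc3⟩ := lemB hwel ρ.length ρ le_rfl (F.count w) (hFocc w)
      exact hcc.2 c3 (by omega) w hc3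
    omega
  exact ⟨⟨n, hbound⟩, (finite_height_lt n).subset (fun d hd => hbound d hd)⟩
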